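/- Let W ⊆ L(ℝ², ℝ²) be the two-dimensional space spanned by the identity I₂ and the rotation J₂ = [[0,−1],[1,0]] (i.e. the operators of multiplication by complex numbers under the identification ℝ² ≅ ℂ). Then for every k ≥ 0, M_k(W) ≠ 0; in particular δ(W) = ∞. -/

import Mathlib

open Function

noncomputable section

variable {E F : Type*} [AddCommGroup E] [Module ℝ E] [AddCommGroup F] [Module ℝ F]

/-- `Mk k V` is the space of symmetric `k`-multilinear maps all of whose partial
contractions (fixing all slots but one) lie in `V`. -/
def Mk (k : ℕ) (V : Submodule ℝ (E →ₗ[ℝ] F)) :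
    Submodule ℝ (MultilinearMap ℝ (fun _ : Fin k => E) F) where
  carrier := {T | (∀ (σ : Equiv.Perm (Fin k)) (x : Fin k → E), T (x ∘ σ) = T x) ∧
    ∀ (x : Fin k → E) (i : Fin k), T.toLinearMap x i ∈ V}
  add_mem' := by
    rintro T S ⟨hT1, hT2⟩ ⟨hS1, hS2⟩
    refine ⟨fun σ x => by simp [hT1 σ x, hS1 σ x], fun x i => ?_⟩
    have h : (T + S).toLinearMap x i = T.toLinearMap x i + S.toLinearMap x i := by
      ext z; simp
    rw [h]; exact V.add_mem (hT2 x i) (hS2 x i)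
  zero_mem' := by
    refine ⟨fun σ x => rfl, fun x i => ?_⟩
    have h : (0 : MultilinearMap ℝ (fun _ : Fin k => E) F).toLinearMap x i = 0 := by
      ext z; simp
    rw [h]; exact V.zero_mem
  smul_mem' := by
    rintro c T ⟨hT1, hT2⟩
    refine ⟨fun σ x => by simp [hT1 σ x], fun x i => ?_⟩
    have h : (c • T).toLinearMap x i = c • T.toLinearMap x i := by
      ext z; simp
    rw [h]; exact V.smul_mem c (hT2 x i)

end

noncomputable section Aux

def φC : (Fin 2 → ℝ) ≃ₗ[ℝ] ℂ := Complex.basisOneI.equivFun.symm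

lemma φC_apply (v : Fin 2 → ℝ) : φC v = Complex.mk (v 0) (v 1) := by
  show Complex.basisOneI.equivFun.symm v = _
  rw [Module.Basis.equivFun_symm_apply]
  simp [Complex.basisOneI, Complex.ext_iff]

lemma φC_symm_apply (z : ℂ) : φC.symm z = ![z.re, z.im] := by
  show Complex.basisOneI.equivFun z = _
  ext i
  simp [Module.Basis.equivFun_apply]

def mulMapL : ℂ →ₗ[ℝ] ((Fin 2 → ℝ) →ₗ[ℝ] (Fin 2 → ℝ)) where
  toFun c := φC.symm.toLinearMap ∘ₗ (LinearMap.mul ℝ ℂ c) ∘ₗ φC.toLinearMap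
  map_add' a b := by ext z j; simp [add_mul]
  map_smul' r c := by ext z j; simp [mul_assoc, ← Complex.real_smul]

lemma mulMapL_apply (c : ℂ) (z : Fin 2 → ℝ) : mulMapL c z = φC.symm (c * φC z) := rfl

lemma mulMapL_one : mulMapL 1 = LinearMap.id := by
  ext z j
  simp [mulMapL_apply]

lemma mulMapL_I : mulMapL Complex.I = Matrix.toLin' !![(0 : ℝ), -1; 1, 0] := by
  apply LinearMap.ext; intro z; funext j
  rw [mulMapL_apply, φC_symm_apply, φC_apply]
  fin_cases j <;>
    simp [Matrix.toLin'_apply, Matrix.mulVec, dotProduct, Fin.sum_univ_two]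

end Aux

/-- For `W = span {I₂, J₂} ⊆ L(ℝ², ℝ²)` (multiplications by complex numbers under
`ℝ² ≅ ℂ`), `M_k(W) ≠ 0` for every `k`; in particular `δ(W) = ∞`. -/



theorem Mk_complex_span_ne_zero
    (J₂ : (Fin 2 → ℝ) →ₗ[ℝ] (Fin 2 → ℝ))
    (hJ : J₂ = Matrix.toLin' !![(0 : ℝ), -1; 1, 0])
    (W : Submodule ℝ ((Fin 2 → ℝ) →ₗ[ℝ] (Fin 2 → ℝ)))
    (hW : W = Submodule.span ℝ {LinearMap.id, J₂}) (k : ℕ) :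
    ∃ T : MultilinearMap ℝ (fun _ : Fin k => (Fin 2 → ℝ)) (Fin 2 → ℝ),
      T ∈ Mk k W ∧ T ≠ 0 := by
  subst hJ hW
  classical
  refine ⟨(φC.symm.toLinearMap).compMultilinearMap
    ((MultilinearMap.mkPiAlgebra ℝ (Fin k) ℂ).compLinearMap (fun _ => φC.toLinearMap)),
    ⟨?_, ?_⟩, ?_⟩
  · intro σ x
    simp only [LinearMap.compMultilinearMap_apply, MultilinearMap.compLinearMap_apply,
      MultilinearMap.mkPiAlgebra_apply, Function.comp_apply]
    congr 1
    exact Equiv.prod_comp σ (fun i => φC (x i))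
  · intro x i
    have key : ((φC.symm.toLinearMap).compMultilinearMap
        ((MultilinearMap.mkPiAlgebra ℝ (Fin k) ℂ).compLinearMap
          (fun _ => φC.toLinearMap))).toLinearMap x i
        = mulMapL (∏ j ∈ Finset.univ.erase i, φC (x j)) := by
      apply LinearMap.ext; intro z
      simp only [MultilinearMap.toLinearMap_apply, LinearMap.compMultilinearMap_apply,
        MultilinearMap.compLinearMap_apply, MultilinearMap.mkPiAlgebra_apply,
        LinearEquiv.coe_coe, LinearMap.coe_comp, Function.comp_apply, mulMapL_apply]
      congr 1
      have h1 : ∀ j, φC (Function.update x i z j)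
          = Function.update (fun j => φC (x j)) i (φC z) j := fun j =>
        Function.apply_update (fun _ y => φC y) x i z j
      rw [Finset.prod_congr rfl (fun j _ => h1 j),
        Finset.prod_update_of_mem (Finset.mem_univ i), mul_comm, Finset.sdiff_singleton_eq_erase]
    rw [key]
    set c := ∏ j ∈ Finset.univ.erase i, φC (x j) with hc
    have hdec : mulMapL c = c.re • mulMapL 1 + c.im • mulMapL Complex.I := by
      rw [← map_smul, ← map_smul, ← map_add]
      congr 1
      apply Complex.ext <;> simp [Complex.real_smul]
    rw [hdec, mulMapL_one, mulMapL_I]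
    exact Submodule.add_mem _
      (Submodule.smul_mem _ _ (Submodule.subset_span (by simp)))
      (Submodule.smul_mem _ _ (Submodule.subset_span (by simp)))
  · intro h0
    have h1 := congrArg (fun f : MultilinearMap ℝ (fun _ : Fin k => (Fin 2 → ℝ)) (Fin 2 → ℝ)
      => f (fun _ => φC.symm 1)) h0
    simp only [LinearMap.compMultilinearMap_apply, MultilinearMap.compLinearMap_apply,
      MultilinearMap.mkPiAlgebra_apply, LinearEquiv.coe_coe, MultilinearMap.zero_apply,
      LinearEquiv.apply_symm_apply, Finset.prod_const_one] at h1
    have h2 := congrArg φC h1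
    simp at h2
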